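/- For all real numbers a > 1 and all real numbers x, y with 0 < x < y, one has (a^y − 1)/(a^x − 1) ≤ (y/x) · a^{y−x}. -/

import Mathlib

/-- For real `a > 1` and `0 < x < y` one has
`(a^y − 1)/(a^x − 1) ≤ (y/x) · a^(y−x)` (real powers). -/
theorem stmt_12 (a x y : ℝ) (ha : 1 < a) (hx : 0 < x) (hxy : x < y) :
    (a ^ y - 1) / (a ^ x - 1) ≤ (y / x) * a ^ (y - x) := by
  have ha0 : 0 < a := lt_trans one_pos ha
  have hL : 0 < Real.log a := Real.log_pos ha
  set t := y - x with ht
  have htpos : 0 < t := sub_pos.mpr hxy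
  -- basic exp bounds
  have h1 : x * Real.log a + 1 ≤ a ^ x := by
    rw [Real.rpow_def_of_pos ha0]
    have := Real.add_one_le_exp (Real.log a * x)
    linarith [this]
  have h2 : -t * Real.log a + 1 ≤ a ^ (-t) := by
    rw [Real.rpow_def_of_pos ha0]
    have := Real.add_one_le_exp (Real.log a * (-t))
    linarith [this]
  have hmul : a ^ t * a ^ (-t) = 1 := by
    rw [← Real.rpow_add ha0]; simp
  have haty : a ^ y = a ^ t * a ^ x := by
    rw [← Real.rpow_add ha0, ht, sub_add_cancel]
  have hax1 : 0 < a ^ x - 1 := by nlinarith [h1, mul_pos hx hL]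
  have hatpos : 0 < a ^ t := Real.rpow_pos_of_pos ha0 t
  -- key inequality: x * (a^t - 1) ≤ t * a^t * (a^x - 1)
  have key : x * (a ^ t - 1) ≤ t * a ^ t * (a ^ x - 1) := by
    nlinarith [mul_le_mul_of_nonneg_left h2 (le_of_lt (mul_pos hx hatpos)),
      mul_le_mul_of_nonneg_left h1 (le_of_lt (mul_pos htpos hatpos)),
      mul_pos hx hatpos, mul_pos htpos hatpos]
  have hy : y = t + x := by rw [ht]; ring
  rw [div_le_iff₀ hax1, div_mul_eq_mul_div, div_mul_eq_mul_div, le_div_iff₀ hx]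
  have expand : (a ^ y - 1) * x = x * (a ^ t - 1) + x * (a ^ t * (a ^ x - 1)) := by
    rw [haty]; ring
  have h3 : y * a ^ t * (a ^ x - 1) = t * a ^ t * (a ^ x - 1) + x * (a ^ t * (a ^ x - 1)) := by
    rw [hy]; ring
  linarith [key]
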